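/- arXiv:1506.06198 — 3 statements merged into one kernel-verified Lean document; each statement's English description precedes it below -/
import Mathlib

section
/- For each i ∈ {2,3,4} and every matrix (a,b;c,d) ∈ SL_2(ℤ) with a ≡ d ≡ 1 (mod 2) and b ≡ c ≡ 0 (mod 2) (i.e. every element of the principal congruence subgroup Γ(2)), for all τ in the complex upper half-plane ℍ and all z ∈ ℂ one has ϑ_i((aτ+b)/(cτ+d), z/(cτ+d))² / ϑ_i((aτ+b)/(cτ+d), 0)² · exp(−2πi·c·z²/(cτ+d)) = ϑ_i(τ,z)²/ϑ_i(τ,0)². That is, ϑ_i(τ,z)²/ϑ_i(τ,0)² satisfies the modular transformation law of a Jacobi form of weight 0 and index 1 for Γ(2). -/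
noncomputable section

open Complex

/-- `2πi`. -/
def twoPiI : ℂ := 2 * Real.pi * Complex.I

/-- `q = e^{2πiτ}`. -/
def qq (τ : ℂ) : ℂ := Complex.exp (twoPiI * τ)

/-- `y = e^{2πiz}`. -/
def yy (z : ℂ) : ℂ := Complex.exp (twoPiI * z)

/-- Jacobi theta function `ϑ₁`. -/
def th1 (τ z : ℂ) : ℂ :=
  -Complex.I * ∑' n : ℤ, (-1 : ℂ) ^ n *
    Complex.exp (twoPiI * (((n : ℂ) + 1/2) * z + ((n : ℂ) + 1/2) ^ 2 / 2 * τ))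

/-- Jacobi theta function `ϑ₂`. -/
def th2 (τ z : ℂ) : ℂ :=
  ∑' n : ℤ, Complex.exp (twoPiI * (((n : ℂ) + 1/2) * z + ((n : ℂ) + 1/2) ^ 2 / 2 * τ))

/-- Jacobi theta function `ϑ₃`. -/
def th3 (τ z : ℂ) : ℂ :=
  ∑' n : ℤ, Complex.exp (twoPiI * ((n : ℂ) * z + (n : ℂ) ^ 2 / 2 * τ))

/-- Jacobi theta function `ϑ₄`. -/
def th4 (τ z : ℂ) : ℂ :=
  ∑' n : ℤ, (-1 : ℂ) ^ n * Complex.exp (twoPiI * ((n : ℂ) * z + (n : ℂ) ^ 2 / 2 * τ))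

/-- The Dedekind eta function `η(τ) = q^{1/24} ∏_{n≥1} (1 - qⁿ)`. -/
def etaF (τ : ℂ) : ℂ :=
  Complex.exp (twoPiI * τ / 24) * ∏' n : ℕ, (1 - qq τ ^ (n + 1))

/-- The quasimodular Eisenstein series `E₂(τ) = 1 - 24 ∑_{n≥1} σ₁(n) qⁿ`. -/
def E2 (τ : ℂ) : ℂ :=
  1 - 24 * ∑' n : ℕ, (∑ d ∈ Nat.divisors (n + 1), (d : ℂ)) * qq τ ^ (n + 1)

/-- `Λ_N(τ) = (N/24)(N E₂(Nτ) - E₂(τ))`. -/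
def Lam (N : ℕ) (τ : ℂ) : ℂ := (N : ℂ) / 24 * ((N : ℂ) * E2 ((N : ℂ) * τ) - E2 τ)

/-- The weak Jacobi form `φ_{0,1}`. -/
def phi01 (τ z : ℂ) : ℂ :=
  4 * (th2 τ z ^ 2 / th2 τ 0 ^ 2 + th3 τ z ^ 2 / th3 τ 0 ^ 2 + th4 τ z ^ 2 / th4 τ 0 ^ 2)

/-- The weak Jacobi form `φ_{-2,1}`. -/
def phim21 (τ z : ℂ) : ℂ := -(th1 τ z ^ 2) / etaF τ ^ 6


namespace ThetaAux

open scoped Real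

lemma jt2_add_int (k : ℤ) (z τ : ℂ) : jacobiTheta₂ (z + k) τ = jacobiTheta₂ z τ := by
  simp only [jacobiTheta₂]
  refine tsum_congr fun n => ?_
  rw [jacobiTheta₂_term, jacobiTheta₂_term,
    show 2 * (π:ℂ) * I * n * (z + k) + (π:ℂ) * I * n ^ 2 * τ
      = ((n * k : ℤ) : ℂ) * (2 * (π:ℂ) * I) + (2 * (π:ℂ) * I * n * z + (π:ℂ) * I * n ^ 2 * τ) by
        push_cast; ring,
    Complex.exp_add, Complex.exp_int_mul_two_pi_mul_I, one_mul]

lemma jt2_add_int_mul (k : ℤ) (z τ : ℂ) :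
    jacobiTheta₂ (z + k * τ) τ =
      Complex.exp (-(π:ℂ) * I * ((k:ℂ) ^ 2 * τ + 2 * k * z)) * jacobiTheta₂ z τ := by
  simp only [jacobiTheta₂]
  conv_rhs => rw [← tsum_mul_left, ← (Equiv.addRight k).tsum_eq]
  refine tsum_congr fun n => ?_
  simp_rw [jacobiTheta₂_term, Equiv.coe_addRight, ← Complex.exp_add]
  congr 1
  push_cast
  ring

lemma jt2_tau_add_one (z τ : ℂ) : jacobiTheta₂ z (τ + 1) = jacobiTheta₂ (z + 1/2) τ := by
  simp only [jacobiTheta₂]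
  refine tsum_congr fun n => ?_
  obtain ⟨m, hm⟩ : Even (n ^ 2 - n) := by
    have h := Int.even_mul_succ_self (n - 1)
    rwa [show (n - 1) * (n - 1 + 1) = n ^ 2 - n by ring] at h
  have hmC : ((n:ℂ)) ^ 2 - (n:ℂ) = 2 * (m : ℂ) := by
    have := congrArg (Int.cast : ℤ → ℂ) hm
    push_cast at this
    linear_combination this
  rw [jacobiTheta₂_term, jacobiTheta₂_term,
    show 2 * (π:ℂ) * I * n * z + (π:ℂ) * I * n ^ 2 * (τ + 1)
      = (m : ℂ) * (2 * (π:ℂ) * I) + (2 * (π:ℂ) * I * n * (z + 1/2) + (π:ℂ) * I * n ^ 2 * τ) by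
        linear_combination ((π:ℂ) * I) * hmC,
    Complex.exp_add, Complex.exp_int_mul_two_pi_mul_I, one_mul]

/-- Theta with characteristics. -/
def TT (a b : ℤ) (τ z : ℂ) : ℂ :=
  Complex.exp ((π:ℂ) * I * ((a:ℂ) ^ 2 * τ / 4 + a * z + a * b / 2)) *
    jacobiTheta₂ (z + b / 2 + a * τ / 2) τ

/-- Squared theta quotient. -/
def FF (a b : ℤ) (τ z : ℂ) : ℂ := TT a b τ z ^ 2 / TT a b τ 0 ^ 2

lemma TT_addA (k a b : ℤ) (τ z : ℂ) : TT (a + 2 * k) b τ z = TT a b τ z := by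
  rw [TT, TT,
    show z + (b:ℂ) / 2 + ((a + 2 * k : ℤ) : ℂ) * τ / 2 = (z + b / 2 + a * τ / 2) + k * τ by
      push_cast; ring,
    jt2_add_int_mul, ← mul_assoc, ← Complex.exp_add]
  congr 2
  push_cast
  ring

lemma TT_addB (k a b : ℤ) (τ z : ℂ) :
    TT a (b + 2 * k) τ z = Complex.exp ((π:ℂ) * I * a * k) * TT a b τ z := by
  rw [TT, TT,
    show z + ((b + 2 * k : ℤ) : ℂ) / 2 + (a:ℂ) * τ / 2 = (z + b / 2 + a * τ / 2) + k by
      push_cast; ring,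
    jt2_add_int, ← mul_assoc, ← Complex.exp_add]
  congr 2
  push_cast
  ring

lemma FF_addA (k a b : ℤ) (τ z : ℂ) : FF (a + 2 * k) b τ z = FF a b τ z := by
  rw [FF, FF, TT_addA, TT_addA]

lemma FF_addB (k a b : ℤ) (τ z : ℂ) : FF a (b + 2 * k) τ z = FF a b τ z := by
  rw [FF, FF, TT_addB, TT_addB, mul_pow, mul_pow,
    mul_div_mul_left _ _ (pow_ne_zero _ (Complex.exp_ne_zero _))]

lemma FF_congr {x y x' y' : ℤ} (h1 : ((x : ZMod 2) = (x' : ZMod 2)))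
    (h2 : ((y : ZMod 2) = (y' : ZMod 2))) (τ z : ℂ) : FF x y τ z = FF x' y' τ z := by
  obtain ⟨k, hk⟩ : (2:ℤ) ∣ (x' - x) := by
    have := (ZMod.intCast_eq_intCast_iff' x x' 2).mp h1
    omega
  obtain ⟨m, hm⟩ : (2:ℤ) ∣ (y' - y) := by
    have := (ZMod.intCast_eq_intCast_iff' y y' 2).mp h2
    omega
  have hx : x' = x + 2 * k := by omega
  have hy : y' = y + 2 * m := by omega
  rw [hx, hy, FF_addA, FF_addB]


lemma th3_eq (τ z : ℂ) : th3 τ z = TT 0 0 τ z := by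
  rw [th3, TT, jacobiTheta₂, ← tsum_mul_left]
  refine tsum_congr fun n => ?_
  rw [jacobiTheta₂_term, ← Complex.exp_add, twoPiI]
  congr 1
  push_cast
  ring

lemma th4_eq (τ z : ℂ) : th4 τ z = TT 0 1 τ z := by
  rw [th4, TT, jacobiTheta₂, ← tsum_mul_left]
  refine tsum_congr fun n => ?_
  have h1 : ((-1:ℂ)) ^ n = Complex.exp ((π:ℂ) * I * n) := by
    rw [show (π:ℂ) * I * n = n * ((π:ℂ) * I) by ring, Complex.exp_int_mul,
      Complex.exp_pi_mul_I]
  rw [jacobiTheta₂_term, h1, ← Complex.exp_add, ← Complex.exp_add, twoPiI]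
  congr 1
  push_cast
  ring

lemma th2_eq (τ z : ℂ) : th2 τ z = TT 1 0 τ z := by
  rw [th2, TT, jacobiTheta₂, ← tsum_mul_left]
  refine tsum_congr fun n => ?_
  rw [jacobiTheta₂_term, ← Complex.exp_add, twoPiI]
  congr 1
  push_cast
  ring


lemma TT_T (a b : ℤ) (τ z : ℂ) :
    TT a b (τ + 1) z =
      Complex.exp (-(π:ℂ) * I * ((a:ℂ) ^ 2 + 2 * a) / 4) * TT a (a + b + 1) τ z := by
  rw [TT, TT, jt2_tau_add_one,
    show (z + (b:ℂ) / 2 + (a:ℂ) * (τ + 1) / 2) + 1/2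
        = z + ((a + b + 1 : ℤ) : ℂ) / 2 + (a:ℂ) * τ / 2 by push_cast; ring,
    ← mul_assoc, ← Complex.exp_add]
  congr 2
  push_cast
  ring

lemma FF_T (a b : ℤ) (τ z : ℂ) : FF a b (τ + 1) z = FF a (a + b + 1) τ z := by
  rw [FF, FF, TT_T, TT_T, mul_pow, mul_pow,
    mul_div_mul_left _ _ (pow_ne_zero _ (Complex.exp_ne_zero _))]

lemma FF_Tq (q : ℤ) : ∀ (a b : ℤ) (τ z : ℂ),
    FF a b (τ + (q:ℂ)) z = FF a (q * a + b + q) τ z := by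
  induction q using Int.induction_on with
  | zero => intro a b τ z; norm_num
  | succ q ih =>
    intro a b τ z
    rw [show (τ + (((q:ℕ) + 1 : ℤ) : ℂ)) = (τ + 1) + ((q:ℤ):ℂ) by push_cast; ring,
      ih, FF_T, show a + (((q:ℕ):ℤ) * a + b + (q:ℕ)) + 1 = (((q:ℕ):ℤ) + 1) * a + b + ((q:ℕ) + 1) by ring]
  | pred q ih =>
    intro a b τ z
    have h2 := FF_T a ((-((q:ℕ):ℤ) - 1) * a + b + (-((q:ℕ):ℤ) - 1)) (τ - 1) z
    rw [sub_add_cancel] at h2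
    rw [show (τ + ((-((q:ℕ):ℤ) - 1 : ℤ) : ℂ)) = (τ - 1) + ((-((q:ℕ):ℤ) : ℤ) : ℂ) by push_cast; ring,
      ih, show (-((q:ℕ):ℤ)) * a + b + (-((q:ℕ):ℤ))
        = a + ((-((q:ℕ):ℤ) - 1) * a + b + (-((q:ℕ):ℤ) - 1)) + 1 by ring, ← h2]


lemma TT_neg (a b : ℤ) (τ z : ℂ) : TT a b τ (-z) = TT (-a) (-b) τ z := by
  rw [TT, TT,
    show -z + (b:ℂ) / 2 + (a:ℂ) * τ / 2
      = -(z + ((-b : ℤ):ℂ) / 2 + ((-a : ℤ):ℂ) * τ / 2) by push_cast; ring,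
    jacobiTheta₂_neg_left]
  congr 2
  push_cast
  ring

lemma FF_neg (a b : ℤ) (τ z : ℂ) : FF a b τ (-z) = FF (-a) (-b) τ z := by
  have h0 := TT_neg a b τ 0
  rw [neg_zero] at h0
  rw [FF, FF, TT_neg, h0]

lemma TT_S (a b : ℤ) {τ : ℂ} (hτ : τ ≠ 0) (z : ℂ) :
    TT a b (-1/τ) (z/τ) =
      (-I * τ) ^ (1/2 : ℂ) * Complex.exp ((π:ℂ) * I * (a * b) / 2) *
        Complex.exp ((π:ℂ) * I * z ^ 2 / τ) * TT b (-a) τ z := by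
  have hC : ((-I * τ) ^ (1/2 : ℂ)) ≠ 0 := by
    simp only [ne_eq, Complex.cpow_eq_zero_iff, not_and_or, not_not]
    left
    simp [hτ, Complex.I_ne_zero]
  set W : ℂ := z + b * τ / 2 - a / 2 with hW
  have hinv : jacobiTheta₂ (W / τ) (-1 / τ)
      = (-I * τ) ^ (1/2 : ℂ) * Complex.exp ((π:ℂ) * I * W ^ 2 / τ) * jacobiTheta₂ W τ := by
    rw [jacobiTheta₂_functional_equation W τ]
    field_simp
    rw [mul_assoc, ← Complex.exp_add, add_neg_cancel, Complex.exp_zero, mul_one]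
  rw [TT, TT,
    show z / τ + (b:ℂ) / 2 + (a:ℂ) * (-1/τ) / 2 = W / τ by rw [hW]; field_simp; ring,
    show z + ((-a : ℤ):ℂ) / 2 + (b:ℂ) * τ / 2 = W by rw [hW]; push_cast; ring,
    hinv]
  have hexp : Complex.exp ((π:ℂ) * I * ((a:ℂ) ^ 2 * (-1/τ) / 4 + a * (z/τ) + a * b / 2)) *
      Complex.exp ((π:ℂ) * I * W ^ 2 / τ)
      = Complex.exp ((π:ℂ) * I * (a * b) / 2) * Complex.exp ((π:ℂ) * I * z ^ 2 / τ) *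
        Complex.exp ((π:ℂ) * I * (((b:ℤ):ℂ) ^ 2 * τ / 4 + ((b:ℤ):ℂ) * z + ((b:ℤ):ℂ) * ((-a:ℤ):ℂ) / 2)) := by
    rw [← Complex.exp_add, ← Complex.exp_add, ← Complex.exp_add]
    congr 1
    rw [hW]
    have h3 : τ ^ 3 * τ⁻¹ ^ 3 = 1 := by
      rw [← mul_pow, mul_inv_cancel₀ hτ, one_pow]
    push_cast
    field_simp
    ring
  push_cast at hexp ⊢
  linear_combination ((-I * τ) ^ (1/2 : ℂ) * jacobiTheta₂ W τ) * hexp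





lemma FF_S (a b : ℤ) {τ : ℂ} (hτ : τ ≠ 0) (z : ℂ) :
    FF a b (-1/τ) (z/τ) = FF b (-a) τ z * Complex.exp (2 * (π:ℂ) * I * z ^ 2 / τ) := by
  have hC : ((-I * τ) ^ (1/2 : ℂ)) * Complex.exp ((π:ℂ) * I * (a * b) / 2) ≠ 0 := by
    refine mul_ne_zero ?_ (Complex.exp_ne_zero _)
    simp only [ne_eq, Complex.cpow_eq_zero_iff, not_and_or, not_not]
    left; simp [hτ, Complex.I_ne_zero]
  have h1 := TT_S a b hτ z
  have h0 := TT_S a b hτ 0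
  rw [zero_div] at h0
  rw [show (π:ℂ) * I * (0:ℂ) ^ 2 / τ = 0 by simp, Complex.exp_zero, mul_one] at h0
  rw [FF, FF, h1, h0]
  set C1 : ℂ := (-I * τ) ^ (1/2 : ℂ) with hC1
  set C2 : ℂ := Complex.exp ((π:ℂ) * I * (a * b) / 2) with hC2
  set E : ℂ := Complex.exp ((π:ℂ) * I * z ^ 2 / τ) with hE
  set T : ℂ := TT b (-a) τ z with hT
  set T0 : ℂ := TT b (-a) τ 0 with hT0
  have step1 : (C1 * C2 * E * T) ^ 2 / (C1 * C2 * T0) ^ 2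
      = ((C1 * C2) * (E * T)) ^ 2 / ((C1 * C2) * T0) ^ 2 := by ring_nf
  rw [step1, mul_pow, mul_pow ((C1*C2)) T0, mul_div_mul_left _ _ (pow_ne_zero 2 hC),
    mul_pow, show E ^ 2 = Complex.exp (2 * (π:ℂ) * I * z ^ 2 / τ) by
      rw [hE, sq, ← Complex.exp_add]; ring_nf]
  ring


lemma lin_ne_zero {c d : ℤ} (h : ¬(c = 0 ∧ d = 0)) {τ : ℂ} (him : 0 < τ.im) :
    (c:ℂ) * τ + d ≠ 0 := by
  rcases eq_or_ne c 0 with hc | hc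
  · have hd : d ≠ 0 := fun hd => h ⟨hc, hd⟩
    simp [hc, Int.cast_eq_zero, hd]
  · intro hJ
    have him' := congrArg Complex.im hJ
    simp only [Complex.add_im, Complex.mul_im, Complex.intCast_im, Complex.intCast_re,
      Complex.zero_im, zero_mul, add_zero, mul_zero] at him'
    have : (c:ℝ) = 0 := by
      rcases mul_eq_zero.mp (by linarith [him'] : (c:ℝ) * τ.im = 0) with h' | h'
      · exact h'
      · exact absurd h' (ne_of_gt him)
    exact hc (by exact_mod_cast this)

lemma Esum_aux {J J1 : ℂ} (hJ : J ≠ 0) (hJ1 : J1 ≠ 0) (R C z : ℂ)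
    (hkey : R * J + 1 - C * J1 = 0) :
    Complex.exp ((2 * (π:ℂ) * I) * R * z ^ 2 / J1) *
      Complex.exp (2 * (π:ℂ) * I * (z / J1) ^ 2 / (J / J1)) *
      Complex.exp (-(2 * (π:ℂ) * I) * C * z ^ 2 / J) = 1 := by
  rw [← Complex.exp_add, ← Complex.exp_add,
    show (2 * (π:ℂ) * I) * R * z ^ 2 / J1 + 2 * (π:ℂ) * I * (z / J1) ^ 2 / (J / J1)
        + -(2 * (π:ℂ) * I) * C * z ^ 2 / J
        = 2 * (π:ℂ) * I * z ^ 2 * (R * J + 1 - C * J1) / (J * J1) from by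
      have hu : J * J⁻¹ = 1 := mul_inv_cancel₀ hJ
      have hv : J1 * J1⁻¹ = 1 := mul_inv_cancel₀ hJ1
      simp only [div_eq_mul_inv, mul_inv, inv_inv]
      linear_combination (-(2 * (π:ℂ) * I * R * z ^ 2 * J1⁻¹)) * hu
        + ((2 * (π:ℂ) * I * z ^ 2 * J⁻¹ * J1⁻¹) + (2 * (π:ℂ) * I * C * z ^ 2 * J⁻¹)) * hv,
    hkey, mul_zero, zero_div, Complex.exp_zero]

lemma main_lemma : ∀ (n : ℕ) (a b c d : ℤ), c.natAbs = n → a * d - b * c = 1 →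
    ∀ (x y : ℤ) (τ z : ℂ), 0 < τ.im →
    FF x y (((a:ℂ) * τ + b) / ((c:ℂ) * τ + d)) (z / ((c:ℂ) * τ + d)) *
        Complex.exp (-(2 * (π:ℂ) * I) * c * z ^ 2 / ((c:ℂ) * τ + d))
      = FF (a * x + c * y + a * c) (b * x + d * y + b * d) τ z := by
  intro n
  induction n using Nat.strong_induction_on with
  | _ n ih =>
  intro a b c d hn hdet x y τ z him
  rcases eq_or_ne c 0 with hc | hc
  · subst hc
    have had : a * d = 1 := by omega
    rcases Int.mul_eq_one_iff_eq_one_or_neg_one.mp had with ⟨ha, hd⟩ | ⟨ha, hd⟩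
    · subst ha; subst hd
      rw [show ((1:ℤ):ℂ) * τ + ((b:ℤ):ℂ) = τ + (b:ℂ) from by push_cast; ring,
        show ((0:ℤ):ℂ) * τ + ((1:ℤ):ℂ) = 1 from by push_cast; ring, div_one, div_one,
        show -(2 * (π:ℂ) * I) * ((0:ℤ):ℂ) * z ^ 2 / 1 = 0 from by push_cast; ring,
        Complex.exp_zero, mul_one, FF_Tq]
      norm_num
    · subst ha; subst hd
      rw [show ((-1:ℤ):ℂ) * τ + ((b:ℤ):ℂ) = -(τ - (b:ℂ)) from by push_cast; ring,
        show ((0:ℤ):ℂ) * τ + ((-1:ℤ):ℂ) = -1 from by push_cast; ring,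
        show -(τ - (b:ℂ)) / (-1) = (τ - (b:ℂ)) from by ring,
        show z / (-1 : ℂ) = -z from by ring,
        show -(2 * (π:ℂ) * I) * ((0:ℤ):ℂ) * z ^ 2 / (-1) = 0 from by push_cast; ring,
        Complex.exp_zero, mul_one, FF_neg,
        show τ - (b:ℂ) = τ + ((-b : ℤ) : ℂ) from by push_cast; ring, FF_Tq]
      norm_num
  · -- c ≠ 0
    have hqr : a % c + c * (a / c) = a := Int.emod_add_mul_ediv a c
    have hr0 : 0 ≤ a % c := Int.emod_nonneg a hc
    have hrlt : a % c < |c| := Int.emod_lt_abs a hc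
    set q : ℤ := a / c with hq
    set r : ℤ := a % c with hr
    have hlt : (-r).natAbs < n := by
      rw [Int.abs_eq_natAbs] at hrlt; omega
    have hdet1 : c * (q * d - b) - d * (-r) = 1 := by linear_combination hdet + d * hqr
    have IH := ih ((-r).natAbs) hlt c d (-r) (q * d - b) rfl hdet1 (q * x + y + q) (-x) τ z him
    have hJ : ((c:ℂ) * τ + d) ≠ 0 := lin_ne_zero (fun h => hc h.1) him
    have hc1d1 : ¬((-r) = 0 ∧ (q * d - b) = 0) := by
      rintro ⟨h1, h2⟩; rw [h1, h2] at hdet1; simp at hdet1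
    have hJ1 : (((-r : ℤ)):ℂ) * τ + (((q * d - b : ℤ)):ℂ) ≠ 0 := lin_ne_zero hc1d1 him
    set J : ℂ := (c:ℂ) * τ + d with hJdef
    set J1 : ℂ := (((-r : ℤ)):ℂ) * τ + (((q * d - b : ℤ)):ℂ) with hJ1def
    set σ : ℂ := J / J1 with hσdef
    have hσ0 : σ ≠ 0 := div_ne_zero hJ hJ1
    have hqrC : (r:ℂ) + c * q = a := by exact_mod_cast congrArg (Int.cast : ℤ → ℂ) hqr
    have hdetC : (a:ℂ) * d - b * c = 1 := by exact_mod_cast congrArg (Int.cast : ℤ → ℂ) hdet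
    have key : (((-r : ℤ)):ℂ) * J + 1 - (c:ℂ) * J1 = 0 := by
      rw [hJdef, hJ1def]; push_cast
      linear_combination (-(1:ℂ)) * hdetC - (d:ℂ) * hqrC
    have IH' : FF (q * x + y + q) (-x) σ (z / J1)
        = FF (c * (q * x + y + q) + (-r) * (-x) + c * (-r))
            (d * (q * x + y + q) + (q * d - b) * (-x) + d * (q * d - b)) τ z *
          Complex.exp ((2 * (π:ℂ) * I) * ((-r : ℤ) : ℂ) * z ^ 2 / J1) := by
      rw [← IH, mul_assoc, ← Complex.exp_add,
        show -(2 * (π:ℂ) * I) * ((-r : ℤ) : ℂ) * z ^ 2 / J1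
            + (2 * (π:ℂ) * I) * ((-r : ℤ) : ℂ) * z ^ 2 / J1 = 0 from by ring,
        Complex.exp_zero, mul_one]
    have hτ' : ((a:ℂ) * τ + b) / J = -1 / σ + (q:ℂ) := by
      rw [hσdef, neg_div, one_div_div, div_eq_iff hJ, add_mul, neg_mul, div_mul_cancel₀ _ hJ,
        hJdef, hJ1def]
      push_cast
      linear_combination (-τ) * hqrC
    have hz' : z / J = (z / J1) / σ := by
      rw [hσdef]
      field_simp
    rw [hτ', hz', FF_Tq, FF_S _ _ hσ0, IH']
    have hEsum : Complex.exp ((2 * (π:ℂ) * I) * ((-r : ℤ) : ℂ) * z ^ 2 / J1) *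
        Complex.exp (2 * (π:ℂ) * I * (z / J1) ^ 2 / σ) *
        Complex.exp (-(2 * (π:ℂ) * I) * (c:ℂ) * z ^ 2 / J) = 1 := by
      rw [hσdef]
      exact Esum_aux hJ hJ1 _ _ z key
    have hperm : ∀ t : ZMod 2, t * t = t := by decide
    have h2 : (2 : ZMod 2) = 0 := by decide
    have ha2 : ((a : ZMod 2)) = (r : ZMod 2) + (c : ZMod 2) * (q : ZMod 2) := by
      have := congrArg (Int.cast : ℤ → ZMod 2) hqr
      push_cast at this
      linear_combination -this
    have hP : ((c * (q * x + y + q) + (-r) * (-x) + c * (-r) : ℤ) : ZMod 2)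
        = ((a * x + c * y + a * c : ℤ) : ZMod 2) := by
      push_cast
      linear_combination (-(x : ZMod 2) - (c : ZMod 2)) * ha2
        + (-(q : ZMod 2)) * hperm (c : ZMod 2)
        + (-((c : ZMod 2) * (r : ZMod 2))) * h2
    have hQ : ((d * (q * x + y + q) + (q * d - b) * (-x) + d * (q * d - b) : ℤ) : ZMod 2)
        = ((b * x + d * y + b * d : ℤ) : ZMod 2) := by
      push_cast
      linear_combination ((q : ZMod 2)) * hperm (d : ZMod 2)
        + ((q : ZMod 2) * (d : ZMod 2) - (b : ZMod 2) * (d : ZMod 2)) * h2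
    rw [show FF (c * (q * x + y + q) + -r * -x + c * -r)
          (d * (q * x + y + q) + (q * d - b) * -x + d * (q * d - b)) τ z *
          Complex.exp (2 * (π:ℂ) * I * ((-r : ℤ) : ℂ) * z ^ 2 / J1) *
          Complex.exp (2 * (π:ℂ) * I * (z / J1) ^ 2 / σ) *
          Complex.exp (-(2 * (π:ℂ) * I) * (c:ℂ) * z ^ 2 / J)
        = FF (c * (q * x + y + q) + -r * -x + c * -r)
          (d * (q * x + y + q) + (q * d - b) * -x + d * (q * d - b)) τ z *
          (Complex.exp ((2 * (π:ℂ) * I) * ((-r : ℤ) : ℂ) * z ^ 2 / J1) *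
          Complex.exp (2 * (π:ℂ) * I * (z / J1) ^ 2 / σ) *
          Complex.exp (-(2 * (π:ℂ) * I) * (c:ℂ) * z ^ 2 / J)) from by ring,
      hEsum, mul_one]
    exact FF_congr hP hQ τ z


end ThetaAux

open scoped Real in
open ThetaAux in

/-- For `i ∈ {2,3,4}` the theta quotients `ϑᵢ(τ,z)²/ϑᵢ(τ,0)²` satisfy the modular
transformation law of a Jacobi form of weight 0 and index 1 for the principal congruence
subgroup `Γ(2)`. -/
theorem theta_quotient_modular_Gamma2 :
    ∀ th ∈ ({th2, th3, th4} : Set (ℂ → ℂ → ℂ)),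
      ∀ a b c d : ℤ, a * d - b * c = 1 →
        Odd a → Odd d → Even b → Even c →
        ∀ τ z : ℂ, 0 < τ.im →
          th (((a : ℂ) * τ + b) / ((c : ℂ) * τ + d)) (z / ((c : ℂ) * τ + d)) ^ 2
              / th (((a : ℂ) * τ + b) / ((c : ℂ) * τ + d)) 0 ^ 2
              * Complex.exp (-twoPiI * (c : ℂ) * z ^ 2 / ((c : ℂ) * τ + d))
            = th τ z ^ 2 / th τ 0 ^ 2 := by
  intro th hth a b c d hdet ha hd hb hc τ z him
  have hth' : th = th2 ∨ th = th3 ∨ th = th4 := by simpa using hth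
  have haZ : ((a : ZMod 2)) = 1 := by
    obtain ⟨k, hk⟩ := ha; rw [hk]; push_cast
    rw [show (2 : ZMod 2) = 0 from by decide]; ring
  have hdZ : ((d : ZMod 2)) = 1 := by
    obtain ⟨k, hk⟩ := hd; rw [hk]; push_cast
    rw [show (2 : ZMod 2) = 0 from by decide]; ring
  have hbZ : ((b : ZMod 2)) = 0 := by
    obtain ⟨k, hk⟩ := hb; rw [hk]; push_cast
    rw [← two_mul, show (2 : ZMod 2) = 0 from by decide, zero_mul]
  have hcZ : ((c : ZMod 2)) = 0 := by
    obtain ⟨k, hk⟩ := hc; rw [hk]; push_cast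
    rw [← two_mul, show (2 : ZMod 2) = 0 from by decide, zero_mul]
  rcases hth' with h | h | h <;> subst h
  · simp only [th2_eq]
    show FF 1 0 (((a : ℂ) * τ + b) / ((c : ℂ) * τ + d)) (z / ((c : ℂ) * τ + d)) *
        Complex.exp (-twoPiI * (c : ℂ) * z ^ 2 / ((c : ℂ) * τ + d)) = FF 1 0 τ z
    rw [show -twoPiI * (c : ℂ) * z ^ 2 / ((c : ℂ) * τ + d)
        = -(2 * ((Real.pi : ℝ) : ℂ) * I) * (c : ℂ) * z ^ 2 / ((c : ℂ) * τ + d) from rfl,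
      main_lemma c.natAbs a b c d rfl hdet 1 0 τ z him]
    refine FF_congr ?_ ?_ τ z
    · push_cast; rw [haZ, hcZ]; norm_num
    · push_cast; rw [hbZ, hdZ]; norm_num
  · simp only [th3_eq]
    show FF 0 0 (((a : ℂ) * τ + b) / ((c : ℂ) * τ + d)) (z / ((c : ℂ) * τ + d)) *
        Complex.exp (-twoPiI * (c : ℂ) * z ^ 2 / ((c : ℂ) * τ + d)) = FF 0 0 τ z
    rw [show -twoPiI * (c : ℂ) * z ^ 2 / ((c : ℂ) * τ + d)
        = -(2 * ((Real.pi : ℝ) : ℂ) * I) * (c : ℂ) * z ^ 2 / ((c : ℂ) * τ + d) from rfl,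
      main_lemma c.natAbs a b c d rfl hdet 0 0 τ z him]
    refine FF_congr ?_ ?_ τ z
    · push_cast; rw [hcZ]; norm_num
    · push_cast; rw [hbZ]; norm_num
  · simp only [th4_eq]
    show FF 0 1 (((a : ℂ) * τ + b) / ((c : ℂ) * τ + d)) (z / ((c : ℂ) * τ + d)) *
        Complex.exp (-twoPiI * (c : ℂ) * z ^ 2 / ((c : ℂ) * τ + d)) = FF 0 1 τ z
    rw [show -twoPiI * (c : ℂ) * z ^ 2 / ((c : ℂ) * τ + d)
        = -(2 * ((Real.pi : ℝ) : ℂ) * I) * (c : ℂ) * z ^ 2 / ((c : ℂ) * τ + d) from rfl,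
      main_lemma c.natAbs a b c d rfl hdet 0 1 τ z him]
    refine FF_congr ?_ ?_ τ z
    · push_cast; rw [hcZ]; norm_num
    · push_cast; rw [hdZ, hbZ]; norm_num
end
end

section
/- For all τ in the complex upper half-plane ℍ, one has Λ_4(τ) = 4·Λ_2(2τ) + 2·Λ_2(τ) and Λ_4(τ + 1/2) = 8·Λ_2(2τ) − 2·Λ_2(τ). -/
noncomputable section

open Complex

def sigN (n : ℕ) : ℕ := ∑ d ∈ Nat.divisors n, d

lemma sum_even_divisors (m : ℕ) (hm : 2 ∣ m) :
    ∑ d ∈ (Nat.divisors m).filter (2 ∣ ·), d = 2 * sigN (m / 2) := by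
  rcases eq_or_ne m 0 with rfl | h0
  · simp [sigN]
  rw [sigN, Finset.mul_sum]
  refine Finset.sum_nbij' (i := fun d => d / 2) (j := fun d => 2 * d) ?_ ?_ ?_ ?_ ?_
  · intro d hd
    simp only [Finset.mem_filter, Nat.mem_divisors] at hd
    obtain ⟨⟨hdm, _⟩, hd2⟩ := hd
    obtain ⟨e, rfl⟩ := hd2
    obtain ⟨f, rfl⟩ := hm
    simp only [Nat.mem_divisors]
    constructor
    · rw [Nat.mul_div_cancel_left _ (by norm_num), Nat.mul_div_cancel_left _ (by norm_num)] at *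
      exact (Nat.mul_dvd_mul_iff_left (by norm_num : 0 < 2)).mp hdm
    · omega
  · intro d hd
    simp only [Nat.mem_divisors] at hd
    simp only [Finset.mem_filter, Nat.mem_divisors]
    obtain ⟨f, rfl⟩ := hm
    rw [Nat.mul_div_cancel_left _ (by norm_num)] at hd
    exact ⟨⟨Nat.mul_dvd_mul_left 2 hd.1, h0⟩, ⟨d, rfl⟩⟩
  · intro d hd
    simp only [Finset.mem_filter] at hd
    omega
  · intro d _; omega
  · intro d hd
    simp only [Finset.mem_filter] at hd
    omega

lemma filter_even_divisors_empty (m : ℕ) (hm : ¬ 2 ∣ m) :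
    (Nat.divisors m).filter (2 ∣ ·) = ∅ := by
  ext d
  simp only [Finset.mem_filter, Nat.mem_divisors, Finset.notMem_empty, iff_false]
  rintro ⟨⟨hdm, _⟩, hd2⟩
  exact hm (hd2.trans hdm)

lemma filter_odd_divisors (k : ℕ) :
    (Nat.divisors (2 * k)).filter (fun d => ¬ 2 ∣ d) =
      (Nat.divisors k).filter (fun d => ¬ 2 ∣ d) := by
  ext d
  simp only [Finset.mem_filter, Nat.mem_divisors]
  constructor
  · rintro ⟨⟨hdm, hne⟩, hd2⟩
    refine ⟨⟨?_, by omega⟩, hd2⟩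
    exact (((Nat.Prime.coprime_iff_not_dvd Nat.prime_two).mpr hd2).symm).dvd_of_dvd_mul_left hdm
  · rintro ⟨⟨hdm, hne⟩, hd2⟩
    exact ⟨⟨hdm.mul_left 2, by omega⟩, hd2⟩

lemma sigN_two_mul (k : ℕ) :
    sigN (2 * k) + 2 * (if 2 ∣ k then sigN (k / 2) else 0) = 3 * sigN k := by
  have h1 : sigN (2 * k) = (∑ d ∈ (Nat.divisors (2*k)).filter (fun d => ¬ 2 ∣ d), d)
      + 2 * sigN k := by
    rw [sigN, ← Finset.sum_filter_add_sum_filter_not (Nat.divisors (2*k)) (2 ∣ ·),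
      sum_even_divisors _ ⟨k, rfl⟩, Nat.mul_div_cancel_left _ (by norm_num)]
    ring
  have h2 : sigN k = (∑ d ∈ (Nat.divisors k).filter (fun d => ¬ 2 ∣ d), d)
      + (if 2 ∣ k then 2 * sigN (k / 2) else 0) := by
    rw [sigN, ← Finset.sum_filter_add_sum_filter_not (Nat.divisors k) (2 ∣ ·)]
    by_cases hk : 2 ∣ k
    · rw [sum_even_divisors _ hk, if_pos hk]; ring
    · rw [filter_even_divisors_empty _ hk, if_neg hk]; simp
  rw [filter_odd_divisors] at h1
  by_cases hk : 2 ∣ k <;> simp only [hk, if_true, if_false] at * <;> omega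

def cC (n : ℕ) : ℂ := ∑ d ∈ Nat.divisors n, (d : ℂ)

lemma cC_eq (n : ℕ) : cC n = (sigN n : ℂ) := by
  rw [cC, sigN]; push_cast; rfl

lemma cC_two_mul (k : ℕ) :
    2 * cC (2 * k) = 6 * cC k - 4 * (if 2 ∣ k then cC (k / 2) else 0) := by
  have h := sigN_two_mul k
  by_cases hk : 2 ∣ k
  · rw [if_pos hk] at h ⊢
    rw [cC_eq, cC_eq, cC_eq]
    have h2 : ((sigN (2*k) + 2 * sigN (k/2) : ℕ) : ℂ) = ((3 * sigN k : ℕ) : ℂ) := by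
      exact_mod_cast congrArg (Nat.cast : ℕ → ℂ) h
    push_cast at h2
    linear_combination 2 * h2
  · rw [if_neg hk] at h ⊢
    rw [cC_eq, cC_eq]
    have h2 : ((sigN (2*k) : ℕ) : ℂ) = ((3 * sigN k : ℕ) : ℂ) := by
      rw [show sigN (2*k) = 3 * sigN k by omega]
    push_cast at h2
    linear_combination 2 * h2

def GG (x : ℂ) : ℂ := ∑' n : ℕ, cC n * x ^ n

lemma summable_GG {x : ℂ} (hx : ‖x‖ < 1) : Summable (fun n : ℕ => cC n * x ^ n) := by
  have hb : ∀ n : ℕ, ‖cC n * x ^ n‖ ≤ (n : ℝ) ^ 2 * ‖x‖ ^ n := by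
    intro n
    rw [norm_mul, norm_pow]
    gcongr
    rw [cC_eq]
    have h1 : sigN n ≤ n * n := by
      rw [sigN]
      calc ∑ d ∈ Nat.divisors n, d ≤ ∑ d ∈ Finset.Ico 1 (n+1), d := by
            apply Finset.sum_le_sum_of_subset
            intro d hd
            rw [Nat.mem_divisors] at hd
            have := Nat.le_of_dvd (Nat.pos_of_ne_zero hd.2) hd.1
            have := Nat.pos_of_dvd_of_pos hd.1 (Nat.pos_of_ne_zero hd.2)
            rw [Finset.mem_Ico]; omega
        _ ≤ (Finset.Ico 1 (n+1)).card • n := by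
            apply Finset.sum_le_card_nsmul
            intro d hd; rw [Finset.mem_Ico] at hd; omega
        _ = n * n := by simp [Nat.card_Ico, mul_comm]
    calc ‖((sigN n : ℂ))‖ = (sigN n : ℝ) := by
          rw [Complex.norm_natCast]
      _ ≤ ((n*n : ℕ) : ℝ) := by exact_mod_cast h1
      _ = (n:ℝ)^2 := by push_cast; ring
  exact Summable.of_norm_bounded (summable_pow_mul_geometric_of_norm_lt_one 2 (by simpa using hx)) hb

lemma GG_neg (x : ℂ) (hx : ‖x‖ < 1) :
    GG (-x) + GG x = 6 * GG (x ^ 2) - 4 * GG (x ^ 4) := by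
  have hx2 : ‖x ^ 2‖ < 1 := by
    rw [norm_pow]; exact pow_lt_one₀ (norm_nonneg x) hx two_ne_zero
  have hx4 : ‖x ^ 4‖ < 1 := by
    rw [norm_pow]; exact pow_lt_one₀ (norm_nonneg x) hx (by norm_num)
  have hxn : ‖-x‖ < 1 := by rwa [norm_neg]
  have hneg := (summable_GG hxn).hasSum
  have h1 := (summable_GG hx).hasSum
  have h2 := ((summable_GG hx2).hasSum).mul_left (6 : ℂ)
  have h4 := ((summable_GG hx4).hasSum).mul_left (4 : ℂ)
  set f : ℕ → ℂ := fun n => cC n * (-x) ^ n + cC n * x ^ n with hf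
  have hadd : HasSum f (GG (-x) + GG x) := hneg.add h1
  have hinj : Function.Injective (fun k : ℕ => 2 * k) := fun a b h => by
    have h' : 2 * a = 2 * b := h
    omega
  have hvan : ∀ n ∉ Set.range (fun k : ℕ => 2 * k), f n = 0 := by
    intro n hn
    have hodd : Odd n := by
      rcases Nat.even_or_odd n with he | ho
      · obtain ⟨m, hm⟩ := he
        exact absurd ⟨m, show 2 * m = n by omega⟩ hn
      · exact ho
    simp only [hf, hodd.neg_pow]; ring
  set g : ℕ → ℂ := fun k => 4 * ((if 2 ∣ k then cC (k / 2) else 0) * x ^ (2 * k)) with hg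
  have hvang : ∀ n ∉ Set.range (fun k : ℕ => 2 * k), g n = 0 := by
    intro n hn
    have h2n : ¬ 2 ∣ n := by
      rintro ⟨m, hm⟩
      exact hn ⟨m, show 2 * m = n by omega⟩
    simp [hg, h2n]
  have hgcomp : (g ∘ fun k : ℕ => 2 * k) = fun j : ℕ => 4 * (cC j * (x ^ 4) ^ j) := by
    funext j
    simp only [hg, Function.comp_apply]
    rw [if_pos ⟨j, rfl⟩, Nat.mul_div_cancel_left _ (by norm_num), ← pow_mul]
    ring_nf
  have hg4 : HasSum g (4 * GG (x ^ 4)) :=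
    (hinj.hasSum_iff hvang).mp (by rw [hgcomp]; exact h4)
  have hsub := h2.sub hg4
  have hcomp : (f ∘ fun k : ℕ => 2 * k) = fun k => 6 * (cC k * (x ^ 2) ^ k) - g k := by
    funext k
    simp only [hf, hg, Function.comp_apply]
    have he : Even (2 * k) := ⟨k, by ring⟩
    rw [he.neg_pow, ← pow_mul]
    linear_combination x ^ (2 * k) * (cC_two_mul k)
  have hfin : HasSum f (6 * GG (x ^ 2) - 4 * GG (x ^ 4)) :=
    (hinj.hasSum_iff hvan).mp (by rw [hcomp]; exact hsub)
  exact hadd.unique hfin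

lemma E2_eq (τ : ℂ) (h : ‖qq τ‖ < 1) : E2 τ = 1 - 24 * GG (qq τ) := by
  rw [E2, GG, Summable.tsum_eq_zero_add (summable_GG h)]
  simp only [cC, Nat.divisors_zero, Finset.sum_empty, zero_mul, pow_zero, mul_one, zero_add]

lemma norm_qq {τ : ℂ} (h : 0 < τ.im) : ‖qq τ‖ < 1 := by
  rw [qq, Complex.norm_exp, Real.exp_lt_one_iff]
  have hre : (twoPiI * τ).re = -(2 * Real.pi * τ.im) := by
    simp [twoPiI, Complex.mul_re, Complex.mul_im]
  rw [hre]
  have := Real.pi_pos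
  nlinarith

lemma qq_two (τ : ℂ) : qq (2 * τ) = qq τ ^ 2 := by
  rw [qq, qq, ← Complex.exp_nat_mul]
  congr 1; push_cast; ring

lemma qq_four (τ : ℂ) : qq (4 * τ) = qq τ ^ 4 := by
  rw [qq, qq, ← Complex.exp_nat_mul]
  congr 1; push_cast; ring

lemma qq_half (τ : ℂ) : qq (τ + 1 / 2) = -qq τ := by
  rw [qq, qq, show twoPiI * (τ + 1/2) = twoPiI * τ + Real.pi * I by rw [twoPiI]; ring,
    Complex.exp_add, Complex.exp_pi_mul_I]
  ring
end

/-- `Λ₄(τ) = 4Λ₂(2τ) + 2Λ₂(τ)` and `Λ₄(τ + 1/2) = 8Λ₂(2τ) − 2Λ₂(τ)`. -/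
theorem Lam4_identities :
    ∀ τ : ℂ, 0 < τ.im →
      Lam 4 τ = 4 * Lam 2 (2 * τ) + 2 * Lam 2 τ ∧
      Lam 4 (τ + 1 / 2) = 8 * Lam 2 (2 * τ) - 2 * Lam 2 τ := by
  intro τ hτ
  have hq : ‖qq τ‖ < 1 := norm_qq hτ
  have hq2 : ‖qq τ ^ 2‖ < 1 := by
    rw [norm_pow]; exact pow_lt_one₀ (norm_nonneg _) hq two_ne_zero
  have hq4 : ‖qq τ ^ 4‖ < 1 := by
    rw [norm_pow]; exact pow_lt_one₀ (norm_nonneg _) hq (by norm_num)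
  have hqn : ‖-qq τ‖ < 1 := by rwa [norm_neg]
  have e1 : E2 τ = 1 - 24 * GG (qq τ) := E2_eq τ hq
  have e2 : E2 (2 * τ) = 1 - 24 * GG (qq τ ^ 2) := by
    rw [E2_eq _ (by rwa [qq_two]), qq_two]
  have e4 : E2 (4 * τ) = 1 - 24 * GG (qq τ ^ 4) := by
    rw [E2_eq _ (by rwa [qq_four]), qq_four]
  have eh : E2 (τ + 1 / 2) = 1 - 24 * GG (-qq τ) := by
    rw [E2_eq _ (by rwa [qq_half]), qq_half]
  have e4h : E2 (4 * (τ + 1 / 2)) = 1 - 24 * GG (qq τ ^ 4) := by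
    rw [E2_eq _ ?_, qq_four, qq_half]
    · rw [show (-qq τ) ^ 4 = qq τ ^ 4 by ring]
    · rw [qq_four, qq_half, show (-qq τ) ^ 4 = qq τ ^ 4 by ring]; exact hq4
  have key := GG_neg (qq τ) hq
  have c2 : ((2 : ℕ) : ℂ) = (2 : ℂ) := by norm_num
  have c4 : ((4 : ℕ) : ℂ) = (4 : ℂ) := by norm_num
  constructor
  · simp only [Lam, c2, c4, show (2:ℂ) * (2 * τ) = 4 * τ by ring, e1, e2, e4]
    ring
  · simp only [Lam, c2, c4, show (2:ℂ) * (2 * τ) = 4 * τ by ring, e1, e2, e4, eh, e4h]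
    linear_combination 4 * key
end

section
/- Let λ_1, …, λ_{10} be complex numbers of modulus 1 and let χ, C, D ∈ ℂ. Assume the eta-product identity 2χ + η_g(τ/2)/η_g(τ) − η_{-g}(τ/2)/η_{-g}(τ) + C·η_{-g}(τ) = 0 holds for all τ ∈ ℍ. Define F(τ) = (1/2)·Λ_2(τ/2)·(η_g(τ/2)/η_g(τ)) − (1/2)·Λ_2(τ/2+1/2)·(η_{-g}(τ/2)/η_{-g}(τ)) + (1/2)·D·η_g(τ) − Λ_2(τ)·C·η_{-g}(τ) and t_g(τ) = η_g(τ)/η_g(2τ). Then for all τ ∈ ℍ one has F(τ) − (1/2)·D·η_g(τ) − 2χ·Λ_2(τ) = (1/4)·[ t_g(τ/2)·Λ_4(τ/2) + t_g((τ+1)/2)·Λ_4((τ+1)/2) ]. -/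
noncomputable section

open Complex

/-- `η_g(τ) = q·∏_{n≥1}[(1−qⁿ)⁴·∏_{i=1}^{10}(1−λᵢ⁻¹qⁿ)(1−λᵢqⁿ)]`. -/
def etaG (lam : Fin 10 → ℂ) (τ : ℂ) : ℂ :=
  qq τ * ∏' n : ℕ, ((1 - qq τ ^ (n + 1)) ^ 4 *
    ∏ i, ((1 - (lam i)⁻¹ * qq τ ^ (n + 1)) * (1 - lam i * qq τ ^ (n + 1))))

/-- `η_{-g}(τ) = q·∏_{n≥1}[(1+qⁿ)⁴·∏_{i=1}^{10}(1+λᵢ⁻¹qⁿ)(1+λᵢqⁿ)]`. -/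
def etaGneg (lam : Fin 10 → ℂ) (τ : ℂ) : ℂ :=
  qq τ * ∏' n : ℕ, ((1 + qq τ ^ (n + 1)) ^ 4 *
    ∏ i, ((1 + (lam i)⁻¹ * qq τ ^ (n + 1)) * (1 + lam i * qq τ ^ (n + 1))))

/-- The twining genus `Φ = φ_g` built from `η_g`, `η_{-g}`, the theta quotients, and the
constants `C = C_{-g}` and `D = D_g`. -/
def Phi (lam : Fin 10 → ℂ) (C D : ℂ) (τ z : ℂ) : ℂ :=
  -(1 / 2) * ((th4 τ z ^ 2 / th4 τ 0 ^ 2) * (etaG lam (τ / 2) / etaG lam τ)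
            - (th3 τ z ^ 2 / th3 τ 0 ^ 2) * (etaGneg lam (τ / 2) / etaGneg lam τ))
  + 1 / 2 * ((th1 τ z ^ 2 / etaF τ ^ 6) * D * etaG lam τ
           - (th2 τ z ^ 2 / th2 τ 0 ^ 2) * C * etaGneg lam τ)

/-- `F = F_g`, as in equation (9.14). -/
def Fg (lam : Fin 10 → ℂ) (C D : ℂ) (τ : ℂ) : ℂ :=
  1 / 2 * Lam 2 (τ / 2) * (etaG lam (τ / 2) / etaG lam τ)
  - 1 / 2 * Lam 2 (τ / 2 + 1 / 2) * (etaGneg lam (τ / 2) / etaGneg lam τ)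
  + 1 / 2 * D * etaG lam τ
  - Lam 2 τ * C * etaGneg lam τ

/-- `t_g(τ) = η_g(τ)/η_g(2τ)`. -/
def tg (lam : Fin 10 → ℂ) (τ : ℂ) : ℂ := etaG lam τ / etaG lam (2 * τ)

def Good (f : ℕ → ℂ) : Prop := Multipliable f ∧ ∏' n, f n ≠ 0

lemma base_ne {c x : ℂ} (hc : ‖c‖ < 1) (hx : ‖x‖ ≤ 1) (n : ℕ) : 1 + c * x ^ n ≠ 0 := by
  have hlt : ‖c * x ^ n‖ < 1 := by
    calc ‖c * x ^ n‖ = ‖c‖ * ‖x‖ ^ n := by rw [norm_mul, norm_pow]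
    _ ≤ ‖c‖ * 1 := by
        gcongr
        exact pow_le_one₀ (norm_nonneg x) hx
    _ < 1 := by simpa using hc
  intro h
  have h2 : c * x ^ n = -1 := by linear_combination h
  rw [h2] at hlt
  simp at hlt

lemma base_summable {c x : ℂ} (hx : ‖x‖ < 1) :
    Summable fun n : ℕ => Complex.log (1 + c * x ^ n) := by
  have hgeo : Summable fun n : ℕ => 3 / 2 * (‖c‖ * ‖x‖ ^ n) :=
    ((summable_geometric_of_lt_one (norm_nonneg x) hx).mul_left ‖c‖).mul_left _
  apply Summable.of_norm_bounded_eventually_nat hgeo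
  have htend : Filter.Tendsto (fun n : ℕ => ‖c‖ * ‖x‖ ^ n) Filter.atTop (nhds 0) := by
    simpa using (tendsto_pow_atTop_nhds_zero_of_lt_one (norm_nonneg x) hx).const_mul ‖c‖
  filter_upwards [htend.eventually_le_const (by norm_num : (0:ℝ) < 1/2)] with n hn
  have hcn : ‖c * x ^ n‖ ≤ 1 / 2 := by
    rw [norm_mul, norm_pow]; exact hn
  calc ‖Complex.log (1 + c * x ^ n)‖ ≤ 3 / 2 * ‖c * x ^ n‖ :=
        Complex.norm_log_one_add_half_le_self hcn
  _ = 3 / 2 * (‖c‖ * ‖x‖ ^ n) := by rw [norm_mul, norm_pow]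

lemma good_base {c x : ℂ} (hc : ‖c‖ < 1) (hx : ‖x‖ < 1) :
    Good (fun n : ℕ => 1 + c * x ^ n) := by
  constructor
  · exact Complex.multipliable_of_summable_log (base_summable hx)
  · have := Complex.cexp_tsum_eq_tprod (f := fun n : ℕ => 1 + c * x ^ n)
      (fun n => base_ne hc hx.le n) (base_summable hx)
    rw [← this]
    exact Complex.exp_ne_zero _

lemma Good.mul {f g : ℕ → ℂ} (hf : Good f) (hg : Good g) : Good (fun n => f n * g n) :=
  ⟨hf.1.mul hg.1, by rw [hf.1.tprod_mul hg.1]; exact mul_ne_zero hf.2 hg.2⟩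

lemma Good.pow {f : ℕ → ℂ} (hf : Good f) (m : ℕ) : Good (fun n => f n ^ m) := by
  induction m with
  | zero =>
      rw [show (fun n => f n ^ 0) = fun _ => (1:ℂ) from by funext n; rw [pow_zero]]
      exact ⟨multipliable_one, by rw [tprod_one]; norm_num⟩
  | succ k ih =>
      rw [show (fun n => f n ^ (k+1)) = fun n => f n ^ k * f n from by funext n; rw [pow_succ]]
      exact ih.mul hf

lemma Good.prod {ι : Type*} {f : ι → ℕ → ℂ} (s : Finset ι) (h : ∀ i ∈ s, Good (f i)) :
    Good (fun n => ∏ i ∈ s, f i n) := by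
  classical
  induction s using Finset.induction_on with
  | empty =>
      rw [show (fun n => ∏ i ∈ (∅ : Finset ι), f i n) = fun _ => (1:ℂ) from by
        funext n; rw [Finset.prod_empty]]
      exact ⟨multipliable_one, by rw [tprod_one]; norm_num⟩
  | @insert a s ha ih =>
      rw [show (fun n => ∏ i ∈ insert a s, f i n) = fun n => f a n * ∏ i ∈ s, f i n from by
        funext n; rw [Finset.prod_insert ha]]
      exact (h a (Finset.mem_insert_self a s)).mul
        (ih fun i hi => h i (Finset.mem_insert_of_mem hi))

lemma good_shape (x a : ℂ) (b c : Fin 10 → ℂ) (hx : ‖x‖ < 1) (ha : ‖a‖ < 1)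
    (hb : ∀ i, ‖b i‖ < 1) (hc : ∀ i, ‖c i‖ < 1) :
    Good (fun n => (1 + a * x ^ n) ^ 4 * ∏ i, ((1 + b i * x ^ n) * (1 + c i * x ^ n))) :=
  ((good_base ha hx).pow 4).mul
    (Good.prod Finset.univ fun i _ => (good_base (hb i) hx).mul (good_base (hc i) hx))


def FacG (lam : Fin 10 → ℂ) (x : ℂ) (n : ℕ) : ℂ :=
  (1 - x ^ (n + 1)) ^ 4 * ∏ i, ((1 - (lam i)⁻¹ * x ^ (n + 1)) * (1 - lam i * x ^ (n + 1)))

def FacH (lam : Fin 10 → ℂ) (x : ℂ) (n : ℕ) : ℂ :=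
  (1 + x ^ (n + 1)) ^ 4 * ∏ i, ((1 + (lam i)⁻¹ * x ^ (n + 1)) * (1 + lam i * x ^ (n + 1)))

variable {lam : Fin 10 → ℂ}

lemma good_FacG (hlam' : ∀ i, ‖lam i‖ = 1) {x : ℂ} (hx : ‖x‖ < 1) : Good (FacG lam x) := by
  have e : FacG lam x = fun n => (1 + (-x) * x ^ n) ^ 4 *
      ∏ i, ((1 + (-((lam i)⁻¹ * x)) * x ^ n) * (1 + (-(lam i * x)) * x ^ n)) := by
    funext n; unfold FacG; congr 1
    · ring
    · exact Finset.prod_congr rfl fun i _ => by ring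
  rw [e]
  exact good_shape _ _ _ _ hx (by simpa using hx)
    (fun i => by simpa [norm_mul, norm_inv, hlam' i] using hx)
    (fun i => by simpa [norm_mul, hlam' i] using hx)

lemma good_FacH (hlam' : ∀ i, ‖lam i‖ = 1) {x : ℂ} (hx : ‖x‖ < 1) : Good (FacH lam x) := by
  have e : FacH lam x = fun n => (1 + x * x ^ n) ^ 4 *
      ∏ i, ((1 + ((lam i)⁻¹ * x) * x ^ n) * (1 + (lam i * x) * x ^ n)) := by
    funext n; unfold FacH; congr 1
    · ring
    · exact Finset.prod_congr rfl fun i _ => by ring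
  rw [e]
  exact good_shape _ _ _ _ hx hx
    (fun i => by simpa [norm_mul, norm_inv, hlam' i] using hx)
    (fun i => by simpa [norm_mul, hlam' i] using hx)

lemma good_FacG_odd (hlam' : ∀ i, ‖lam i‖ = 1) {x : ℂ} (hx : ‖x‖ < 1) :
    Good (fun k => FacG lam x (2 * k + 1)) := by
  have hx2 : ‖x ^ 2‖ < 1 := by
    rw [norm_pow]; exact pow_lt_one₀ (norm_nonneg x) hx (by norm_num)
  have e : (fun k => FacG lam x (2 * k + 1)) = fun n => (1 + (-(x ^ 2)) * (x ^ 2) ^ n) ^ 4 *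
      ∏ i, ((1 + (-((lam i)⁻¹ * x ^ 2)) * (x ^ 2) ^ n) * (1 + (-(lam i * x ^ 2)) * (x ^ 2) ^ n)) := by
    funext n; unfold FacG; congr 1
    · ring
    · exact Finset.prod_congr rfl fun i _ => by ring
  rw [e]
  exact good_shape _ _ _ _ hx2 (by simpa using hx2)
    (fun i => by simpa [norm_mul, norm_inv, hlam' i] using hx2)
    (fun i => by simpa [norm_mul, hlam' i] using hx2)

lemma good_FacH_even (hlam' : ∀ i, ‖lam i‖ = 1) {x : ℂ} (hx : ‖x‖ < 1) :
    Good (fun k => FacH lam x (2 * k)) := by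
  have hx2 : ‖x ^ 2‖ < 1 := by
    rw [norm_pow]; exact pow_lt_one₀ (norm_nonneg x) hx (by norm_num)
  have e : (fun k => FacH lam x (2 * k)) = fun n => (1 + x * (x ^ 2) ^ n) ^ 4 *
      ∏ i, ((1 + ((lam i)⁻¹ * x) * (x ^ 2) ^ n) * (1 + (lam i * x) * (x ^ 2) ^ n)) := by
    funext n; unfold FacH; congr 1
    · ring
    · exact Finset.prod_congr rfl fun i _ => by ring
  rw [e]
  exact good_shape _ _ _ _ hx2 hx
    (fun i => by simpa [norm_mul, norm_inv, hlam' i] using hx)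
    (fun i => by simpa [norm_mul, hlam' i] using hx)

lemma good_FacH_odd (hlam' : ∀ i, ‖lam i‖ = 1) {x : ℂ} (hx : ‖x‖ < 1) :
    Good (fun k => FacH lam x (2 * k + 1)) := by
  have hx2 : ‖x ^ 2‖ < 1 := by
    rw [norm_pow]; exact pow_lt_one₀ (norm_nonneg x) hx (by norm_num)
  have e : (fun k => FacH lam x (2 * k + 1)) = fun n => (1 + x ^ 2 * (x ^ 2) ^ n) ^ 4 *
      ∏ i, ((1 + ((lam i)⁻¹ * x ^ 2) * (x ^ 2) ^ n) * (1 + (lam i * x ^ 2) * (x ^ 2) ^ n)) := by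
    funext n; unfold FacH; congr 1
    · ring
    · exact Finset.prod_congr rfl fun i _ => by ring
  rw [e]
  exact good_shape _ _ _ _ hx2 hx2
    (fun i => by simpa [norm_mul, norm_inv, hlam' i] using hx2)
    (fun i => by simpa [norm_mul, hlam' i] using hx2)

lemma FacG_neg_even (lam : Fin 10 → ℂ) (x : ℂ) :
    (fun k => FacG lam (-x) (2 * k)) = fun k => FacH lam x (2 * k) := by
  funext k
  have h : (-x) ^ (2 * k + 1) = -(x ^ (2 * k + 1)) := Odd.neg_pow ⟨k, by ring⟩ x
  unfold FacG FacH
  rw [h]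
  simp [mul_neg, sub_neg_eq_add]

lemma FacG_neg_odd (lam : Fin 10 → ℂ) (x : ℂ) :
    (fun k => FacG lam (-x) (2 * k + 1)) = fun k => FacG lam x (2 * k + 1) := by
  funext k
  have h : (-x) ^ (2 * k + 1 + 1) = x ^ (2 * k + 1 + 1) := Even.neg_pow ⟨k + 1, by ring⟩ x
  unfold FacG
  rw [h]

lemma FacG_sq (lam : Fin 10 → ℂ) (x : ℂ) :
    (fun n => FacG lam (x ^ 2) n) = fun n => FacG lam x (2 * n + 1) := by
  funext n; unfold FacG; congr 1
  · ring
  · exact Finset.prod_congr rfl fun i _ => by ring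

lemma FacH_sq (lam : Fin 10 → ℂ) (x : ℂ) :
    (fun n => FacH lam (x ^ 2) n) = fun n => FacH lam x (2 * n + 1) := by
  funext n; unfold FacH; congr 1
  · ring
  · exact Finset.prod_congr rfl fun i _ => by ring

lemma tprod_FacG_neg (hlam' : ∀ i, ‖lam i‖ = 1) {p : ℂ} (hp : ‖p‖ < 1) :
    ∏' n, FacG lam (-p) n
      = (∏' k, FacH lam p (2 * k)) * ∏' k, FacG lam p (2 * k + 1) := by
  have he : Multipliable fun k => FacG lam (-p) (2 * k) := by
    rw [FacG_neg_even]; exact (good_FacH_even hlam' hp).1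
  have ho : Multipliable fun k => FacG lam (-p) (2 * k + 1) := by
    rw [FacG_neg_odd]; exact (good_FacG_odd hlam' hp).1
  rw [← tprod_even_mul_odd he ho, FacG_neg_even, FacG_neg_odd]

lemma tprod_FacH_split (hlam' : ∀ i, ‖lam i‖ = 1) {p : ℂ} (hp : ‖p‖ < 1) :
    ∏' n, FacH lam p n
      = (∏' k, FacH lam p (2 * k)) * ∏' k, FacH lam p (2 * k + 1) :=
  (tprod_even_mul_odd (good_FacH_even hlam' hp).1 (good_FacH_odd hlam' hp).1).symm

lemma norm_qq_lt_one {z : ℂ} (hz : 0 < z.im) : ‖qq z‖ < 1 := by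
  rw [qq, twoPiI, Complex.norm_exp, Real.exp_lt_one_iff]
  simp only [Complex.mul_re, Complex.mul_im, Complex.I_re, Complex.I_im, Complex.ofReal_re,
    Complex.ofReal_im, Complex.re_ofNat, Complex.im_ofNat]
  nlinarith [Real.pi_pos, hz]
lemma qq_ne_zero (z : ℂ) : qq z ≠ 0 := Complex.exp_ne_zero _

lemma qq_add_one (z : ℂ) : qq (z + 1) = qq z := by
  rw [qq, qq, twoPiI, mul_add, Complex.exp_add, mul_one, Complex.exp_two_pi_mul_I, mul_one]

lemma E2_add_one (z : ℂ) : E2 (z + 1) = E2 z := by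
  unfold E2
  simp only [qq_add_one]

lemma etaG_add_one (lam : Fin 10 → ℂ) (z : ℂ) : etaG lam (z + 1) = etaG lam z := by
  unfold etaG
  simp only [qq_add_one]

lemma qq_half_sq (τ : ℂ) : qq τ = qq (τ / 2) ^ 2 := by
  rw [qq, qq, sq, ← Complex.exp_add]
  exact congrArg Complex.exp (by ring)

lemma qq_half_shift (τ : ℂ) : qq ((τ + 1) / 2) = -qq (τ / 2) := by
  rw [qq, qq, show twoPiI * ((τ + 1) / 2) = twoPiI * (τ / 2) + ↑Real.pi * Complex.I from by
    unfold twoPiI; ring, Complex.exp_add, Complex.exp_pi_mul_I]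
  ring

lemma etaG_eq (lam : Fin 10 → ℂ) (τ : ℂ) :
    etaG lam τ = qq τ * ∏' n, FacG lam (qq τ) n := rfl

lemma etaGneg_eq (lam : Fin 10 → ℂ) (τ : ℂ) :
    etaGneg lam τ = qq τ * ∏' n, FacH lam (qq τ) n := rfl



/-- Assuming the eta-product identity,
`F(τ) − (1/2)·D·η_g(τ) − 2χ·Λ₂(τ) = (1/4)·[t_g(τ/2)·Λ₄(τ/2) + t_g((τ+1)/2)·Λ₄((τ+1)/2)]`. -/
theorem Fg_Hecke_expression (lam : Fin 10 → ℂ)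
    (hlam : ∀ i, ‖lam i‖ = 1) (chi C D : ℂ)
    (hid : ∀ τ : ℂ, 0 < τ.im →
      2 * chi + etaG lam (τ / 2) / etaG lam τ - etaGneg lam (τ / 2) / etaGneg lam τ
        + C * etaGneg lam τ = 0) :
    ∀ τ : ℂ, 0 < τ.im →
      Fg lam C D τ - 1 / 2 * D * etaG lam τ - 2 * chi * Lam 2 τ
        = 1 / 4 * (tg lam (τ / 2) * Lam 4 (τ / 2)
            + tg lam ((τ + 1) / 2) * Lam 4 ((τ + 1) / 2)) := by
  intro τ hτ
  have hlam' : ∀ i, ‖lam i‖ = 1 := fun i => by exact hlam i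
  have him : 0 < (τ / 2).im := by
    rw [Complex.div_ofNat_im]; exact div_pos hτ two_pos
  have him' : 0 < ((τ + 1) / 2).im := by
    rw [Complex.div_ofNat_im, Complex.add_im, Complex.one_im]
    exact div_pos (by linarith) two_pos
  have hp : ‖qq (τ / 2)‖ < 1 := norm_qq_lt_one him
  have hqτn : ‖qq τ‖ < 1 := norm_qq_lt_one hτ
  have hGne : etaG lam τ ≠ 0 := by
    rw [etaG_eq]
    exact mul_ne_zero (qq_ne_zero τ) (good_FacG hlam' hqτn).2
  have hHne : etaGneg lam τ ≠ 0 := by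
    rw [etaGneg_eq]
    exact mul_ne_zero (qq_ne_zero τ) (good_FacH hlam' hqτn).2
  have key : etaG lam ((τ + 1) / 2) * etaGneg lam τ
      = -(etaGneg lam (τ / 2) * etaG lam τ) := by
    rw [etaG_eq lam ((τ + 1) / 2), etaGneg_eq lam τ, etaGneg_eq lam (τ / 2), etaG_eq lam τ,
      qq_half_shift, qq_half_sq τ, FacG_sq, FacH_sq, tprod_FacG_neg hlam' hp,
      tprod_FacH_split hlam' hp]
    ring
  have htg1 : tg lam (τ / 2) = etaG lam (τ / 2) / etaG lam τ := by
    rw [tg, show (2 : ℂ) * (τ / 2) = τ from by ring]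
  have htg2 : tg lam ((τ + 1) / 2) = -(etaGneg lam (τ / 2) / etaGneg lam τ) := by
    rw [tg, show (2 : ℂ) * ((τ + 1) / 2) = τ + 1 from by ring, etaG_add_one]
    field_simp
    linear_combination key
  have hC : C * etaGneg lam τ
      = etaGneg lam (τ / 2) / etaGneg lam τ - etaG lam (τ / 2) / etaG lam τ - 2 * chi := by
    linear_combination hid τ hτ
  have L2h : Lam 2 (τ / 2) = 1 / 12 * (2 * E2 τ - E2 (τ / 2)) := by
    rw [Lam, show ((2 : ℕ) : ℂ) * (τ / 2) = τ from by push_cast; ring]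
    push_cast; ring
  have L2s : Lam 2 (τ / 2 + 1 / 2) = 1 / 12 * (2 * E2 τ - E2 ((τ + 1) / 2)) := by
    rw [Lam, show ((2 : ℕ) : ℂ) * (τ / 2 + 1 / 2) = τ + 1 from by push_cast; ring,
      show τ / 2 + 1 / 2 = (τ + 1) / 2 from by ring, E2_add_one]
    push_cast; ring
  have L2t : Lam 2 τ = 1 / 12 * (2 * E2 (2 * τ) - E2 τ) := by
    rw [Lam, show ((2 : ℕ) : ℂ) * τ = 2 * τ from by push_cast; ring]
    push_cast; ring
  have L4h : Lam 4 (τ / 2) = 1 / 6 * (4 * E2 (2 * τ) - E2 (τ / 2)) := by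
    rw [Lam, show ((4 : ℕ) : ℂ) * (τ / 2) = 2 * τ from by push_cast; ring]
    push_cast; ring
  have L4s : Lam 4 ((τ + 1) / 2) = 1 / 6 * (4 * E2 (2 * τ) - E2 ((τ + 1) / 2)) := by
    rw [Lam, show ((4 : ℕ) : ℂ) * ((τ + 1) / 2) = (2 * τ + 1) + 1 from by push_cast; ring,
      E2_add_one, E2_add_one]
    push_cast; ring
  simp only [Fg]
  rw [htg1, htg2, L2h, L2s, L2t, L4h, L4s]
  linear_combination (-(1 / 12 * (2 * E2 (2 * τ) - E2 τ))) * hC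
end
end
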